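/- Let ε > 0 and γ, θ > 0 and suppose N_# ≍ ε^{−γ₂ ε^{−γ₁ ε^{−d}−d} − γ₃ ε^{−d} − d} · log(ε^{−1}) · γ₄ for fixed positive constants γ₁, γ₂, γ₃, γ₄, d. Then log log N_# ≍ γ₁ ε^{−d} log(ε^{−1}) as ε → 0, and consequently ε ≍ (log log N_# / log log log N_#)^{−1/d} as N_# → ∞. -/

import Mathlib

set_option maxHeartbeats 1000000

open Real Filter Set Topology

theorem stmt17 (γ₁ γ₂ γ₃ γ₄ d : ℝ)
    (h₁ : 0 < γ₁) (h₂ : 0 < γ₂) (h₃ : 0 < γ₃) (h₄ : 0 < γ₄) (hd : 0 < d)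
    (Nh : ℝ → ℝ) (c C : ℝ) (hc : 0 < c) (hcC : c ≤ C)
    (hN : ∃ ε₀ > (0 : ℝ), ∀ ε : ℝ, 0 < ε → ε < ε₀ →
      c * (ε ^ (-(γ₂ * ε ^ (-(γ₁ * ε ^ (-d)) - d)) - γ₃ * ε ^ (-d) - d) *
          Real.log ε⁻¹ * γ₄) ≤ Nh ε ∧
      Nh ε ≤ C * (ε ^ (-(γ₂ * ε ^ (-(γ₁ * ε ^ (-d)) - d)) - γ₃ * ε ^ (-d) - d) *
          Real.log ε⁻¹ * γ₄)) :
    (∃ c₁ > (0 : ℝ), ∃ C₁ > (0 : ℝ), ∃ ε₁ > (0 : ℝ), ∀ ε : ℝ, 0 < ε → ε < ε₁ →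
      c₁ * (γ₁ * ε ^ (-d) * Real.log ε⁻¹) ≤ Real.log (Real.log (Nh ε)) ∧
      Real.log (Real.log (Nh ε)) ≤ C₁ * (γ₁ * ε ^ (-d) * Real.log ε⁻¹)) ∧
    (∃ c₂ > (0 : ℝ), ∃ C₂ > (0 : ℝ), ∃ ε₂ > (0 : ℝ), ∀ ε : ℝ, 0 < ε → ε < ε₂ →
      c₂ * (Real.log (Real.log (Nh ε)) /
          Real.log (Real.log (Real.log (Nh ε)))) ^ (-(1 / d)) ≤ ε ∧
      ε ≤ C₂ * (Real.log (Real.log (Nh ε)) /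
          Real.log (Real.log (Real.log (Nh ε)))) ^ (-(1 / d))) := by
  obtain ⟨ε₀, hε₀, hbound⟩ := hN
  have hC : 0 < C := lt_of_lt_of_le hc hcC
  set K : ℝ := C * γ₄ + γ₂ + γ₃ + d with hKdef
  have hKpos : 0 < K := by positivity
  -- the threshold for t = log ε⁻¹
  set T : ℝ := 1 + |1/(c*γ₄)| + |(2 - 2*Real.log γ₂)/γ₁| + |1/γ₁| + |2*(d+1)/(γ₁*d)|
      + |2*Real.log K/γ₁| + |Real.log (2*γ₁)| + |(-2)*Real.log (γ₁/2)/d| with hTdef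
  -- chosen constants for part 2
  set lo : ℝ := γ₁/(2*(d+2)) with hlodef
  set hi : ℝ := 4*γ₁/d with hhidef
  have hlo : 0 < lo := by positivity
  have hhi : 0 < hi := by positivity
  set c₂ : ℝ := lo ^ (1/d) with hc₂def
  set C₂ : ℝ := hi ^ (1/d) with hC₂def
  have hc₂ : 0 < c₂ := Real.rpow_pos_of_pos hlo _
  have hC₂ : 0 < C₂ := Real.rpow_pos_of_pos hhi _
  -- the main eventual claim
  have hev : ∀ᶠ ε in 𝓝[>] (0:ℝ),
      ((1/2 : ℝ) * (γ₁ * ε ^ (-d) * Real.log ε⁻¹) ≤ Real.log (Real.log (Nh ε)) ∧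
        Real.log (Real.log (Nh ε)) ≤ (2:ℝ) * (γ₁ * ε ^ (-d) * Real.log ε⁻¹)) ∧
      (c₂ * (Real.log (Real.log (Nh ε)) /
          Real.log (Real.log (Real.log (Nh ε)))) ^ (-(1 / d)) ≤ ε ∧
      ε ≤ C₂ * (Real.log (Real.log (Nh ε)) /
          Real.log (Real.log (Real.log (Nh ε)))) ^ (-(1 / d))) := by
    have htend : Tendsto (fun ε : ℝ => Real.log ε⁻¹) (𝓝[>] (0:ℝ)) atTop :=
      Real.tendsto_log_atTop.comp tendsto_inv_nhdsGT_zero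
    filter_upwards [htend.eventually (eventually_ge_atTop T),
      Ioo_mem_nhdsGT_of_mem ⟨le_refl (0:ℝ), hε₀⟩, self_mem_nhdsWithin]
      with ε hT hIoo hεmem
    have hε : (0:ℝ) < ε := hεmem
    set t : ℝ := Real.log ε⁻¹ with htdef
    have hlogε : Real.log ε = -t := by rw [htdef, Real.log_inv]; ring
    -- abs facts
    have a1 := le_abs_self (1/(c*γ₄))
    have a2 := le_abs_self ((2 - 2*Real.log γ₂)/γ₁)
    have a3 := le_abs_self (1/γ₁)
    have a4 := le_abs_self (2*(d+1)/(γ₁*d))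
    have a5 := le_abs_self (2*Real.log K/γ₁)
    have a6 := le_abs_self (Real.log (2*γ₁))
    have a7 := le_abs_self ((-2)*Real.log (γ₁/2)/d)
    have b1 := abs_nonneg (1/(c*γ₄))
    have b2 := abs_nonneg ((2 - 2*Real.log γ₂)/γ₁)
    have b3 := abs_nonneg (1/γ₁)
    have b4 := abs_nonneg (2*(d+1)/(γ₁*d))
    have b5 := abs_nonneg (2*Real.log K/γ₁)
    have b6 := abs_nonneg (Real.log (2*γ₁))
    have b7 := abs_nonneg ((-2)*Real.log (γ₁/2)/d)
    have ht1 : (1:ℝ) ≤ t := by rw [hTdef] at hT; linarith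
    have ht0 : (0:ℝ) < t := by linarith
    have hc1 : 1/(c*γ₄) ≤ t := by rw [hTdef] at hT; linarith
    have hc2 : (2 - 2*Real.log γ₂)/γ₁ ≤ t := by rw [hTdef] at hT; linarith
    have hc3 : 1/γ₁ ≤ t := by rw [hTdef] at hT; linarith
    have hc4 : 2*(d+1)/(γ₁*d) ≤ t := by rw [hTdef] at hT; linarith
    have hc5 : 2*Real.log K/γ₁ ≤ t := by rw [hTdef] at hT; linarith
    have hc6 : Real.log (2*γ₁) ≤ t := by rw [hTdef] at hT; linarith
    have hc7 : (-2)*Real.log (γ₁/2)/d ≤ t := by rw [hTdef] at hT; linarith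
    clear a1 a2 a3 a4 a5 a6 a7 b1 b2 b3 b4 b5 b6 b7 hT
    -- B, Q, G
    set B : ℝ := Real.exp (d*t) with hBdef
    set Q : ℝ := Real.exp ((γ₁*B + d)*t) with hQdef
    have hB0 : 0 < B := Real.exp_pos _
    have hQ0 : 0 < Q := Real.exp_pos _
    have hB1 : 1 ≤ B := Real.one_le_exp (by positivity)
    have hBdt : d*t ≤ B := by
      have := Real.add_one_le_exp (d*t); rw [hBdef]; linarith
    -- H-conditions
    have H2 : (1:ℝ) ≤ c*γ₄*t := by
      rw [div_le_iff₀ (by positivity)] at hc1; linarith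
    have hBt : γ₁*t ≤ γ₁*B*t := by
      linarith [mul_nonneg (mul_nonneg h₁.le ht0.le) (sub_nonneg.mpr hB1)]
    have H3 : 2 - 2*Real.log γ₂ ≤ γ₁*B*t := by
      rw [div_le_iff₀ h₁] at hc2; linarith
    have H4 : (1:ℝ) ≤ γ₁*t := by rw [div_le_iff₀ h₁] at hc3; linarith
    have H5 : 2*(d+1) ≤ γ₁*B := by
      rw [div_le_iff₀ (by positivity : (0:ℝ) < γ₁*d)] at hc4
      linarith [mul_le_mul_of_nonneg_left hBdt h₁.le]
    have H6 : 2*Real.log K ≤ γ₁*B*t := by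
      rw [div_le_iff₀ h₁] at hc5; linarith
    have H8 : (-2)*Real.log (γ₁/2) ≤ d*t := by
      rw [div_le_iff₀ hd] at hc7; linarith
    have hQ1 : 1 ≤ Q := Real.one_le_exp (by positivity)
    have hBQ : B ≤ Q := by
      rw [hBdef, hQdef]
      apply Real.exp_le_exp.mpr
      have h1' : B ≤ γ₁*t*B := le_mul_of_one_le_left hB0.le H4
      have h2' : 0 ≤ d*t := by positivity
      have h3' : (γ₁*B+d)*t = γ₁*t*B + d*t := by ring
      linarith
    -- rewrite the powers of ε
    have e1 : ε ^ (-d) = B := by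
      rw [Real.rpow_def_of_pos hε, hlogε, hBdef]; ring_nf
    have e2 : ε ^ (-(γ₁ * ε ^ (-d)) - d) = Q := by
      rw [e1, Real.rpow_def_of_pos hε, hlogε, hQdef]; ring_nf
    have e3 : ε ^ (-(γ₂ * ε ^ (-(γ₁ * ε ^ (-d)) - d)) - γ₃ * ε ^ (-d) - d)
        = Real.exp ((γ₂*Q + γ₃*B + d)*t) := by
      rw [e2, e1, Real.rpow_def_of_pos hε, hlogε]; ring_nf
    set G : ℝ := γ₂*Q + γ₃*B + d with hGdef
    have hG0 : 0 < G := by positivity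
    set P : ℝ := Real.exp (G*t) * t * γ₄ with hPdef
    have hP0 : 0 < P := by positivity
    obtain ⟨hlo', hhi'⟩ := hbound ε hε hIoo.2
    rw [e3, ← htdef, ← hPdef] at hlo' hhi'
    have hNpos : 0 < Nh ε := lt_of_lt_of_le (by positivity) hlo'
    set L : ℝ := Real.log (Nh ε) with hLdef
    have hlogP : Real.log P = G*t + Real.log t + Real.log γ₄ := by
      rw [hPdef, Real.log_mul (by positivity) (ne_of_gt h₄),
        Real.log_mul (by positivity) (ne_of_gt ht0), Real.log_exp]
    have hexpQ : Real.exp (γ₁*B*t) ≤ Q := by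
      rw [hQdef]
      apply Real.exp_le_exp.mpr
      have h2' : 0 ≤ d*t := by positivity
      have h3' : (γ₁*B+d)*t = γ₁*B*t + d*t := by ring
      linarith
    -- lower bound on L
    have hLlo : γ₂ * Real.exp (γ₁*B*t) ≤ L := by
      have hl1 : Real.log (c*P) ≤ L := Real.log_le_log (by positivity) hlo'
      rw [Real.log_mul (ne_of_gt hc) (ne_of_gt hP0), hlogP] at hl1
      have hl2 : 0 ≤ Real.log c + (Real.log t + Real.log γ₄) := by
        have he : Real.log c + (Real.log t + Real.log γ₄) = Real.log (c*γ₄*t) := by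
          rw [Real.log_mul (by positivity) (ne_of_gt ht0),
            Real.log_mul (ne_of_gt hc) (ne_of_gt h₄)]
          ring
        rw [he]; exact Real.log_nonneg H2
      have hl3 : γ₂ * Real.exp (γ₁*B*t) ≤ γ₂*Q := mul_le_mul_of_nonneg_left hexpQ h₂.le
      have hl4 : γ₂*Q ≤ γ₂*Q*t := le_mul_of_one_le_right (by positivity) ht1
      have hl5 : 0 ≤ (γ₃*B+d)*t := by positivity
      have hl6 : G*t = γ₂*Q*t + (γ₃*B+d)*t := by rw [hGdef]; ring
      linarith
    have hL0 : 0 < L := lt_of_lt_of_le (by positivity) hLlo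
    -- upper bound on L
    have hLhi : L ≤ K*Q*t := by
      have hl1 : L ≤ Real.log (C*P) := Real.log_le_log hNpos hhi'
      rw [Real.log_mul (ne_of_gt hC) (ne_of_gt hP0), hlogP] at hl1
      have hl2 : Real.log C + (Real.log t + Real.log γ₄) ≤ C*γ₄*t := by
        have he : Real.log C + (Real.log t + Real.log γ₄) = Real.log (C*γ₄*t) := by
          rw [Real.log_mul (by positivity) (ne_of_gt ht0),
            Real.log_mul (ne_of_gt hC) (ne_of_gt h₄)]
          ring
        rw [he]; exact Real.log_le_self (by positivity)
      have hsum : C*γ₄ + γ₂*Q + γ₃*B + d ≤ K*Q := by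
        have s1 : C*γ₄ ≤ C*γ₄*Q := le_mul_of_one_le_right (by positivity) hQ1
        have s2 : γ₃*B ≤ γ₃*Q := mul_le_mul_of_nonneg_left hBQ h₃.le
        have s3 : d ≤ d*Q := le_mul_of_one_le_right hd.le hQ1
        have s4 : K*Q = C*γ₄*Q + γ₂*Q + γ₃*Q + d*Q := by rw [hKdef]; ring
        linarith
      have hmul : (C*γ₄ + γ₂*Q + γ₃*B + d)*t ≤ K*Q*t :=
        mul_le_mul_of_nonneg_right hsum ht0.le
      have hexpand : C*γ₄*t + G*t = (C*γ₄ + γ₂*Q + γ₃*B + d)*t := by rw [hGdef]; ring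
      linarith
    -- bounds on LL = log L
    set LL : ℝ := Real.log L with hLLdef
    have hABt : 0 < γ₁*B*t := by positivity
    have hLLlo : 1/2*(γ₁*B*t) + 1 ≤ LL := by
      have hl1 : Real.log (γ₂ * Real.exp (γ₁*B*t)) ≤ LL :=
        Real.log_le_log (by positivity) hLlo
      rw [Real.log_mul (ne_of_gt h₂) (ne_of_gt (Real.exp_pos _)), Real.log_exp] at hl1
      linarith
    have hLLhi : LL ≤ 2*(γ₁*B*t) := by
      have hl1 : LL ≤ Real.log (K*Q*t) := Real.log_le_log hL0 hLhi
      rw [Real.log_mul (by positivity) (ne_of_gt ht0),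
        Real.log_mul (ne_of_gt hKpos) (ne_of_gt hQ0), hQdef, Real.log_exp] at hl1
      have hl2 : Real.log t ≤ t := Real.log_le_self ht0.le
      have hl3 : 2*(d+1)*t ≤ γ₁*B*t := mul_le_mul_of_nonneg_right H5 ht0.le
      have hl4 : (γ₁*B+d)*t = γ₁*B*t + d*t := by ring
      linarith
    have hLL0 : 0 < LL := by linarith
    refine ⟨⟨by rw [e1]; linarith, by rw [e1]; linarith⟩, ?_⟩
    -- part 2
    set LLL : ℝ := Real.log LL with hLLLdef
    have hLLLlo : d/2*t ≤ LLL := by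
      have hl1 : Real.log (γ₁/2*B*t) ≤ LLL := by
        apply Real.log_le_log (by positivity); linarith
      rw [Real.log_mul (by positivity) (ne_of_gt ht0),
        Real.log_mul (by positivity) (ne_of_gt hB0), hBdef, Real.log_exp] at hl1
      have hl2 : 0 ≤ Real.log t := Real.log_nonneg ht1
      linarith
    have hLLLhi : LLL ≤ (d+2)*t := by
      have hl1 : LLL ≤ Real.log (2*γ₁*B*t) := by
        apply Real.log_le_log hLL0; linarith
      rw [Real.log_mul (by positivity) (ne_of_gt ht0),
        Real.log_mul (by positivity) (ne_of_gt hB0), hBdef, Real.log_exp] at hl1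
      have hl2 : Real.log t ≤ t := Real.log_le_self ht0.le
      linarith
    have hLLL0 : 0 < LLL := lt_of_lt_of_le (by positivity) hLLLlo
    -- bounds on the ratio
    have hrlo : lo*B ≤ LL/LLL := by
      rw [le_div_iff₀ hLLL0]
      have hm : lo*B*LLL ≤ lo*B*((d+2)*t) :=
        mul_le_mul_of_nonneg_left hLLLhi (by positivity)
      have he : lo*B*((d+2)*t) = 1/2*(γ₁*B*t) := by
        rw [hlodef]; field_simp
      linarith
    have hrhi : LL/LLL ≤ hi*B := by
      rw [div_le_iff₀ hLLL0]
      have hm : hi*B*(d/2*t) ≤ hi*B*LLL :=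
        mul_le_mul_of_nonneg_left hLLLlo (by positivity)
      have he : hi*B*(d/2*t) = 2*(γ₁*B*t) := by
        rw [hhidef]; field_simp; ring
      linarith
    have hr0 : 0 < LL/LLL := div_pos hLL0 hLLL0
    have hXhi : (LL/LLL) ^ (-(1/d)) ≤ (lo*B) ^ (-(1/d)) :=
      Real.rpow_le_rpow_of_nonpos (by positivity) hrlo (neg_nonpos.mpr (by positivity))
    have hXlo : (hi*B) ^ (-(1/d)) ≤ (LL/LLL) ^ (-(1/d)) :=
      Real.rpow_le_rpow_of_nonpos hr0 hrhi (neg_nonpos.mpr (by positivity))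
    have hεexp : Real.exp (-t) = ε := by rw [← hlogε, Real.exp_log hε]
    have hBe : B ^ (-(1/d)) = ε := by
      rw [hBdef, Real.rpow_def_of_pos (Real.exp_pos _), Real.log_exp,
        show d*t*(-(1/d)) = -t by field_simp, hεexp]
    have hloB : (lo*B) ^ (-(1/d)) = lo ^ (-(1/d)) * ε := by
      rw [Real.mul_rpow hlo.le hB0.le, hBe]
    have hhiB : (hi*B) ^ (-(1/d)) = hi ^ (-(1/d)) * ε := by
      rw [Real.mul_rpow hhi.le hB0.le, hBe]
    have hcc : c₂ * lo ^ (-(1/d)) = 1 := by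
      rw [hc₂def, ← Real.rpow_add hlo]; norm_num
    have hCC : C₂ * hi ^ (-(1/d)) = 1 := by
      rw [hC₂def, ← Real.rpow_add hhi]; norm_num
    constructor
    · calc c₂ * (LL/LLL) ^ (-(1/d)) ≤ c₂ * ((lo*B) ^ (-(1/d))) :=
            mul_le_mul_of_nonneg_left hXhi hc₂.le
        _ = c₂ * lo ^ (-(1/d)) * ε := by rw [hloB]; ring
        _ = ε := by rw [hcc]; ring
    · calc ε = C₂ * hi ^ (-(1/d)) * ε := by rw [hCC]; ring
        _ = C₂ * ((hi*B) ^ (-(1/d))) := by rw [hhiB]; ring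
        _ ≤ C₂ * (LL/LLL) ^ (-(1/d)) := mul_le_mul_of_nonneg_left hXlo hC₂.le
  obtain ⟨u, hu, hsub⟩ := mem_nhdsGT_iff_exists_Ioo_subset.mp hev
  refine ⟨⟨1/2, by norm_num, 2, by norm_num, u, hu, fun ε h1 h2 => (hsub ⟨h1, h2⟩).1⟩,
    ⟨c₂, hc₂, C₂, hC₂, u, hu, fun ε h1 h2 => (hsub ⟨h1, h2⟩).2⟩⟩
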